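/- arXiv:2112.14409 — 2 statements merged into one kernel-verified Lean document; each statement's English description precedes it below -/
import Mathlib

section
/- (i) There exists C > 0, depending only on λ̄ and α, such that for every f : ℝ^d → ℝ and all M, H ≥ 0 satisfying |f(z)| ≤ M·ρ(z) for all z ∈ ℝ^d and |f(z)/ρ(z) − f(z′)/ρ(z′)| ≤ H·|z−z′|^α whenever 0 < |z−z′| ≤ 1, and for all y, y′ ∈ ℝ^d with 0 < |y−y′| ≤ 1 and ⟨Sy,y⟩ ≤ ⟨Sy′,y′⟩, one has |f(y) − f(y′)|/ρ(y′) ≤ (C·M + H)·|y−y′|^α. (ii) There exists C > 0, depending only on λ̄ and α, such that for every f : ℝ^d → ℝ and all M, H ≥ 0 satisfying |f(z)| ≤ M·ρ(z) for all z ∈ ℝ^d and |f(z) − f(z′)| ≤ H·|z−z′|^α whenever 0 < |z−z′| ≤ 1, and for all y, y′ ∈ ℝ^d with 0 < |y−y′| ≤ 1, one has |f(y)/ρ(y) − f(y′)/ρ(y′)| ≤ C·M·|y−y′|^α + H·|y−y′|^α·min(ρ(y)^{−1}, ρ(y′)^{−1}). -/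
open scoped ENNReal
open Set

noncomputable section

/-- Euclidean space `ℝ^d`. -/
abbrev Rd (d : ℕ) : Type := EuclideanSpace ℝ (Fin d)

namespace Nonlocal

/-! ### Spatial and temporal derivative operators -/

/-- First-order spatial partial derivative in the coordinate direction `i`. -/
def pd1 {d : ℕ} (i : Fin d) (f : Rd d → ℝ) : Rd d → ℝ :=
  fun y => fderiv ℝ f y (EuclideanSpace.single i 1)

/-- Iterated spatial partial derivative `∂_I` along the multi-index `I` of length `j`. -/
def mderiv {d : ℕ} : (j : ℕ) → (Fin j → Fin d) → (Rd d → ℝ) → Rd d → ℝ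
  | 0, _, f => f
  | j + 1, I, f => pd1 (I 0) (mderiv j (fun k => I k.succ) f)

/-- Partial derivative in the (running) time variable of a function of `(s, y)`. -/
def dS {d : ℕ} (ψ : ℝ → Rd d → ℝ) : ℝ → Rd d → ℝ :=
  fun s y => deriv (fun s' => ψ s' y) s

/-- Mixed partial derivative `∂_s^h ∂_y^I ψ`. -/
def mixD {d : ℕ} (h j : ℕ) (I : Fin j → Fin d) (ψ : ℝ → Rd d → ℝ) : ℝ → Rd d → ℝ :=
  dS^[h] (fun s y => mderiv j I (fun y' => ψ s y') y)

/-! ### Parabolic Hölder norms -/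

/-- Supremum of `|φ|` over `[a,b] × ℝ^d`. -/
def supA {d : ℕ} (a b : ℝ) (φ : ℝ → Rd d → ℝ) : ℝ≥0∞ :=
  ⨆ s ∈ Icc a b, ⨆ y : Rd d, ENNReal.ofReal |φ s y|

/-- Spatial Hölder seminorm `⟨φ⟩_y^{(β)}` (with truncation parameter `ρ₀`). -/
def hY {d : ℕ} (ρ₀ β a b : ℝ) (φ : ℝ → Rd d → ℝ) : ℝ≥0∞ :=
  ⨆ s ∈ Icc a b, ⨆ y : Rd d, ⨆ y' : Rd d,
    ⨆ (_ : 0 < dist y y' ∧ dist y y' ≤ ρ₀),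
      ENNReal.ofReal (|φ s y - φ s y'| / dist y y' ^ β)

/-- Temporal Hölder seminorm `⟨φ⟩_s^{(β)}` (with truncation parameter `ρ₀`). -/
def hS {d : ℕ} (ρ₀ β a b : ℝ) (φ : ℝ → Rd d → ℝ) : ℝ≥0∞ :=
  ⨆ s ∈ Icc a b, ⨆ s' ∈ Icc a b, ⨆ y : Rd d,
    ⨆ (_ : 0 < |s - s'| ∧ |s - s'| ≤ ρ₀),
      ENNReal.ofReal (|φ s y - φ s' y| / |s - s'| ^ β)

/-- The parabolic Hölder norm `|ψ|^{(l)}_{[a,b] × ℝ^d}` with parabolic scaling `2r`. -/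
def pNorm {d : ℕ} (r : ℕ) (ρ₀ l a b : ℝ) (ψ : ℝ → Rd d → ℝ) : ℝ≥0∞ :=
  (∑ h ∈ Finset.range (⌊l⌋₊ + 1), ∑ j ∈ Finset.range (⌊l⌋₊ + 1),
    if 2 * r * h + j ≤ ⌊l⌋₊ then ∑ I : Fin j → Fin d, supA a b (mixD h j I ψ) else 0) +
  (∑ h ∈ Finset.range (⌊l⌋₊ + 1), ∑ j ∈ Finset.range (⌊l⌋₊ + 1),
    if 2 * r * h + j = ⌊l⌋₊ then
      ∑ I : Fin j → Fin d, hY ρ₀ (l - (⌊l⌋₊ : ℝ)) a b (mixD h j I ψ)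
    else 0) +
  (∑ h ∈ Finset.range (⌊l⌋₊ + 1), ∑ j ∈ Finset.range (⌊l⌋₊ + 1),
    if 0 < l - ((2 * r * h + j : ℕ) : ℝ) ∧ l - ((2 * r * h + j : ℕ) : ℝ) < (2 * r : ℝ) then
      ∑ I : Fin j → Fin d,
        hS ρ₀ ((l - ((2 * r * h + j : ℕ) : ℝ)) / (2 * r : ℝ)) a b (mixD h j I ψ)
    else 0)

/-- Parabolic Hölder norm of an `ℝ^m`-valued function (sum over the components). -/
def pNormV {d m : ℕ} (r : ℕ) (ρ₀ l a b : ℝ) (ψ : ℝ → Rd d → Fin m → ℝ) : ℝ≥0∞ :=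
  ∑ i : Fin m, pNorm r ρ₀ l a b (fun s y => ψ s y i)

/-- Partial derivative in the external time parameter `t`. -/
def dT {d m : ℕ} (u : ℝ → ℝ → Rd d → Fin m → ℝ) : ℝ → ℝ → Rd d → Fin m → ℝ :=
  fun t s y b => deriv (fun t' => u t' s y b) t

/-- Partial derivative in the running time variable `s`. -/
def dSu {d m : ℕ} (u : ℝ → ℝ → Rd d → Fin m → ℝ) : ℝ → ℝ → Rd d → Fin m → ℝ :=
  fun t s y b => deriv (fun s' => u t s' y b) s

/-- Partial `t`-derivative of a scalar function of `(t,s,y)`. -/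
def dT3 {d : ℕ} (w : ℝ → ℝ → Rd d → ℝ) : ℝ → ℝ → Rd d → ℝ :=
  fun t s y => deriv (fun t' => w t' s y) t

/-- The norm `[u]^{(l)}_{[0,δ]}`. -/
def normTheta {d m : ℕ} (r : ℕ) (ρ₀ l δ : ℝ) (u : ℝ → ℝ → Rd d → Fin m → ℝ) : ℝ≥0∞ :=
  ⨆ t ∈ Icc (0 : ℝ) δ, pNormV r ρ₀ l 0 t (u t)

/-- The norm `‖u‖^{(l)}_{[0,δ]}`. -/
def normOmega {d m : ℕ} (r : ℕ) (ρ₀ l δ : ℝ) (u : ℝ → ℝ → Rd d → Fin m → ℝ) : ℝ≥0∞ :=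
  ⨆ t ∈ Icc (0 : ℝ) δ, (pNormV r ρ₀ l 0 t (u t) + pNormV r ρ₀ l 0 t (dT u t))

/-- The triangular time-space region `Δ[0,δ] × ℝ^d`. -/
def DeltaDom (d : ℕ) (δ : ℝ) : Set (ℝ × ℝ × Rd d) :=
  {p | 0 ≤ p.2.1 ∧ p.2.1 ≤ p.1 ∧ p.1 ≤ δ}

/-- Membership in the space `Θ^{(l)}_{[0,δ]}`. -/
def memTheta {d m : ℕ} (r : ℕ) (ρ₀ l δ : ℝ) (u : ℝ → ℝ → Rd d → Fin m → ℝ) : Prop :=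
  ContinuousOn (fun p : ℝ × ℝ × Rd d => fun b => u p.1 p.2.1 p.2.2 b) (DeltaDom d δ) ∧
  normTheta r ρ₀ l δ u < ⊤

/-- Membership in the space `Ω^{(l)}_{[0,δ]}` (continuously differentiable in `t`). -/
def memOmega {d m : ℕ} (r : ℕ) (ρ₀ l δ : ℝ) (u : ℝ → ℝ → Rd d → Fin m → ℝ) : Prop :=
  ContinuousOn (fun p : ℝ × ℝ × Rd d => fun b => u p.1 p.2.1 p.2.2 b) (DeltaDom d δ) ∧
  (∀ (t s : ℝ) (y : Rd d) (b : Fin m), (t, s, y) ∈ DeltaDom d δ →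
    DifferentiableAt ℝ (fun t' => u t' s y b) t) ∧
  ContinuousOn (fun p : ℝ × ℝ × Rd d => fun b => dT u p.1 p.2.1 p.2.2 b) (DeltaDom d δ) ∧
  normOmega r ρ₀ l δ u < ⊤

/-- Scalar version of `memOmega`. -/
def memOmegaS {d : ℕ} (r : ℕ) (ρ₀ l δ : ℝ) (w : ℝ → ℝ → Rd d → ℝ) : Prop :=
  memOmega (m := 1) r ρ₀ l δ (fun t s y _ => w t s y)

/-- An initial datum `g = g(t,y)` regarded as an element of `Ω^{(l)}_{[0,δ]}` (constant in `s`). -/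
def memOmegaInit {d m : ℕ} (r : ℕ) (ρ₀ l δ : ℝ) (g : ℝ → Rd d → Fin m → ℝ) : Prop :=
  memOmega r ρ₀ l δ (fun t _ y => g t y)

/-- Pointwise agreement of two functions on `Δ[0,δ] × ℝ^d`. -/
def AgreeOn {d m : ℕ} (δ : ℝ) (u v : ℝ → ℝ → Rd d → Fin m → ℝ) : Prop :=
  ∀ (t s : ℝ) (y : Rd d) (b : Fin m), 0 ≤ s → s ≤ t → t ≤ δ → u t s y b = v t s y b


/-! ### Nonlocal linear systems -/

/-- Coefficient family `A^{aI}_b(t,s,y)`, indexed by components `a, b` and multi-indices `I`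
(of every length `j`; only `j ≤ 2r` is ever used). -/
abbrev Coeff (d m : ℕ) :=
  Fin m → (j : ℕ) → (Fin j → Fin d) → Fin m → ℝ → ℝ → Rd d → ℝ

/-- The nonlocal linear operator `L` of order `2r`. -/
def Lop {d m : ℕ} (r : ℕ) (A B : Coeff d m) (u : ℝ → ℝ → Rd d → Fin m → ℝ) :
    ℝ → ℝ → Rd d → Fin m → ℝ := fun t s y a =>
  (∑ j ∈ Finset.range (2 * r + 1), ∑ I : Fin j → Fin d, ∑ b : Fin m,
    A a j I b t s y * mderiv j I (fun y' => u t s y' b) y) +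
  (∑ j ∈ Finset.range (2 * r + 1), ∑ I : Fin j → Fin d, ∑ b : Fin m,
    B a j I b t s y * mderiv j I (fun y' => u s s y' b) y)

/-- Strong ellipticity of the nonlocal linear operator with coefficients `A, B`. -/
def StronglyElliptic {d m : ℕ} (r : ℕ) (T : ℝ) (A B : Coeff d m) : Prop :=
  ∃ lam : ℝ, 0 < lam ∧ ∀ (t s : ℝ) (y ξ : Rd d) (v : Fin m → ℝ),
    0 ≤ s → s ≤ t → t ≤ T →
    (lam * ‖ξ‖ ^ (2 * r) * (∑ a, v a ^ 2) ≤
      (-1 : ℝ) ^ (r - 1) * ∑ a : Fin m, ∑ b : Fin m, ∑ I : Fin (2 * r) → Fin d,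
        A a (2 * r) I b t s y * (∏ k, ξ (I k)) * v a * v b) ∧
    (lam * ‖ξ‖ ^ (2 * r) * (∑ a, v a ^ 2) ≤
      (-1 : ℝ) ^ (r - 1) * ∑ a : Fin m, ∑ b : Fin m, ∑ I : Fin (2 * r) → Fin d,
        (A a (2 * r) I b t s y + B a (2 * r) I b t s y) * (∏ k, ξ (I k)) * v a * v b)

/-- All the coefficients `A^{aI}_b` with `|I| ≤ 2r` belong to `Ω^{(l)}_{[0,δ]}`. -/
def CoeffOmega {d m : ℕ} (r : ℕ) (ρ₀ l δ : ℝ) (A : Coeff d m) : Prop :=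
  ∀ (a b : Fin m) (j : ℕ), j ≤ 2 * r → ∀ I : Fin j → Fin d,
    memOmegaS r ρ₀ l δ (A a j I b)

/-- `u` solves the nonlocal linear system `∂_s u = Lu + f`, `u(t,0,y) = g(t,y)`
on `Δ[0,T] × ℝ^d`. -/
def SolvesLinear {d m : ℕ} (r : ℕ) (T : ℝ) (A B : Coeff d m)
    (f : ℝ → ℝ → Rd d → Fin m → ℝ) (g : ℝ → Rd d → Fin m → ℝ)
    (u : ℝ → ℝ → Rd d → Fin m → ℝ) : Prop :=
  (∀ (t s : ℝ) (y : Rd d), 0 ≤ s → s ≤ t → t ≤ T → ∀ a : Fin m,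
    dSu u t s y a = Lop r A B u t s y a + f t s y a) ∧
  (∀ t : ℝ, 0 ≤ t → t ≤ T → ∀ (y : Rd d) (a : Fin m), u t 0 y a = g t y a)

/-- The pair `(u, v)` solves the induced system on `Δ[0,T] × ℝ^d`. -/
def SolvesInduced {d m : ℕ} (r : ℕ) (T : ℝ) (A B : Coeff d m)
    (f : ℝ → ℝ → Rd d → Fin m → ℝ) (g : ℝ → Rd d → Fin m → ℝ)
    (u v : ℝ → ℝ → Rd d → Fin m → ℝ) : Prop :=
  (∀ (t s : ℝ) (y : Rd d), 0 ≤ s → s ≤ t → t ≤ T → ∀ a : Fin m,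
    dSu u t s y a =
      (∑ j ∈ Finset.range (2 * r + 1), ∑ I : Fin j → Fin d, ∑ b : Fin m,
        (A a j I b t s y + B a j I b t s y) * mderiv j I (fun y' => u t s y' b) y) -
      (∑ j ∈ Finset.range (2 * r + 1), ∑ I : Fin j → Fin d, ∑ b : Fin m,
        B a j I b t s y * ∫ θ in s..t, mderiv j I (fun y' => v θ s y' b) y) +
      f t s y a) ∧
  (∀ (t s : ℝ) (y : Rd d), 0 ≤ s → s ≤ t → t ≤ T → ∀ a : Fin m,
    dSu v t s y a =
      (∑ j ∈ Finset.range (2 * r + 1), ∑ I : Fin j → Fin d, ∑ b : Fin m,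
        A a j I b t s y * mderiv j I (fun y' => v t s y' b) y) +
      (∑ j ∈ Finset.range (2 * r + 1), ∑ I : Fin j → Fin d, ∑ b : Fin m,
        (dT3 (A a j I b) t s y + dT3 (B a j I b) t s y) *
          mderiv j I (fun y' => u t s y' b) y) -
      (∑ j ∈ Finset.range (2 * r + 1), ∑ I : Fin j → Fin d, ∑ b : Fin m,
        dT3 (B a j I b) t s y * ∫ θ in s..t, mderiv j I (fun y' => v θ s y' b) y) +
      dT f t s y a) ∧
  (∀ t : ℝ, 0 ≤ t → t ≤ T → ∀ (y : Rd d) (a : Fin m),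
    u t 0 y a = g t y a ∧ v t 0 y a = deriv (fun t' => g t' y a) t)


/-! ### Nonlocal fully nonlinear systems -/

/-- Multi-indices of length `≤ 2r`. -/
abbrev MIdx (d r : ℕ) := Σ j : Fin (2 * r + 1), Fin (j : ℕ) → Fin d

/-- Coordinates of the argument space `Z`: a local block (`0`) and a diagonal block (`1`),
each indexed by a multi-index `|I| ≤ 2r` and a component `b`. -/
abbrev ZIdx (d m r : ℕ) := Fin 2 × MIdx d r × Fin m

/-- The finite-dimensional argument space `Z` of pairs `z = (w, w̄)`. -/
abbrev Zsp (d m r : ℕ) := ZIdx d m r → ℝ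

/-- Euclidean norm on `Z`. -/
def znorm {d m r : ℕ} (z : Zsp d m r) : ℝ := Real.sqrt (∑ c, z c ^ 2)

/-- The open ball `B(z₀, R)` in `Z`. -/
def ZBall {d m r : ℕ} (z0 : Zsp d m r) (R : ℝ) : Set (Zsp d m r) :=
  {z | znorm (z - z0) < R}

/-- The derivative tuple `(((∂_I u^b)(t,s,y))_{I,b}, ((∂_I u^b)(s,s,y))_{I,b}) ∈ Z`. -/
def derivPair {d m : ℕ} (r : ℕ) (u : ℝ → ℝ → Rd d → Fin m → ℝ) (t s : ℝ) (y : Rd d) :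
    Zsp d m r :=
  fun c => mderiv (c.2.1.1 : ℕ) c.2.1.2
    (fun y' => u (if c.1 = 0 then t else s) s y' c.2.2) y

/-- The derivative tuple of an initial datum `g`:
`(((∂_I g^b)(t,y))_{I,b}, ((∂_I g^b)(s,y))_{I,b}) ∈ Z`. -/
def gPair {d m : ℕ} (r : ℕ) (g : ℝ → Rd d → Fin m → ℝ) (t s : ℝ) (y : Rd d) :
    Zsp d m r :=
  derivPair r (fun t' _ y' => g t' y') t s y

/-- Composition `F(u)(t,s,y)` of a nonlinearity with the derivative tuple of `u`. -/
def Fapp {d m : ℕ} (r : ℕ) (F : ℝ → ℝ → Rd d → Zsp d m r → Fin m → ℝ)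
    (u : ℝ → ℝ → Rd d → Fin m → ℝ) : ℝ → ℝ → Rd d → Fin m → ℝ :=
  fun t s y a => F t s y (derivPair r u t s y) a

/-- Partial derivative of a nonlinearity in the `z`-coordinate `c`. -/
def dz {d m r : ℕ} (G : ℝ → ℝ → Rd d → Zsp d m r → ℝ) (c : ZIdx d m r) :
    ℝ → ℝ → Rd d → Zsp d m r → ℝ :=
  fun t s y z => fderiv ℝ (G t s y) z (Pi.single c 1)

/-- Partial derivative of a nonlinearity in `t`. -/
def dtZ {d m r : ℕ} (G : ℝ → ℝ → Rd d → Zsp d m r → ℝ) :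
    ℝ → ℝ → Rd d → Zsp d m r → ℝ :=
  fun t s y z => deriv (fun t' => G t' s y z) t

/-- The family of functions `F, ∂_t F, ∂_I F, ∂_I F̄, ∂²_{tI} F, ∂²_{tI} F̄, ∂²_{IJ} F,
∂²_{IJ} F̄` appearing in the regularity conditions (ii)–(iii). -/
def FFam {d m : ℕ} (r : ℕ) (F : ℝ → ℝ → Rd d → Zsp d m r → Fin m → ℝ) :
    Set (ℝ → ℝ → Rd d → Zsp d m r → ℝ) :=
  {G | (∃ a, G = fun t s y z => F t s y z a) ∨
    (∃ a, G = dtZ (fun t s y z => F t s y z a)) ∨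
    (∃ a c, G = dz (fun t s y z => F t s y z a) c) ∨
    (∃ a c, G = dtZ (dz (fun t s y z => F t s y z a) c)) ∨
    (∃ a c c', c'.1 = (0 : Fin 2) ∧ G = dz (dz (fun t s y z => F t s y z a) c) c')}

/-- The `z`-coordinate of top order `|I| = 2r` in block `blk` with indices `(I, b)`. -/
def topCoord {d m : ℕ} (r : ℕ) (blk : Fin 2) (I : Fin (2 * r) → Fin d) (b : Fin m) :
    ZIdx d m r :=
  (blk, ⟨(⟨2 * r, Nat.lt_succ_self _⟩ : Fin (2 * r + 1)), I⟩, b)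

/-- The quadratic form of the principal symbol (with or without the diagonal block). -/
def ellipSum {d m : ℕ} (r : ℕ) (F : ℝ → ℝ → Rd d → Zsp d m r → Fin m → ℝ)
    (withBar : Bool) (t s : ℝ) (y : Rd d) (z : Zsp d m r) (ξ : Rd d)
    (v : Fin m → ℝ) : ℝ :=
  ∑ a : Fin m, ∑ b : Fin m, ∑ I : Fin (2 * r) → Fin d,
    (dz (fun t' s' y' z' => F t' s' y' z' a) (topCoord r 0 I b) t s y z +
      (if withBar then
        dz (fun t' s' y' z' => F t' s' y' z' a) (topCoord r 1 I b) t s y z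
      else 0)) * (∏ k, ξ (I k)) * v a * v b

/-- The standing conditions (i)–(iii) on a nonlinearity `F`, with prescribed constants:
`lam` (ellipticity), `K` (Hölder bound), `L` (Lipschitz bound), over a given `z`-domain. -/
def StandingNLC {d m : ℕ} (r : ℕ) (T ρ₀ α : ℝ) (Zdom : Set (Zsp d m r))
    (lam : ℝ) (K : ℝ≥0∞) (L : ℝ)
    (F : ℝ → ℝ → Rd d → Zsp d m r → Fin m → ℝ) : Prop :=
  (∀ (t s : ℝ) (y : Rd d), 0 ≤ s → s ≤ t → t ≤ T → ∀ z ∈ Zdom,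
    ∀ (ξ : Rd d) (v : Fin m → ℝ),
      (lam * ‖ξ‖ ^ (2 * r) * (∑ a, v a ^ 2) ≤
        (-1 : ℝ) ^ (r - 1) * ellipSum r F false t s y z ξ v) ∧
      (lam * ‖ξ‖ ^ (2 * r) * (∑ a, v a ^ 2) ≤
        (-1 : ℝ) ^ (r - 1) * ellipSum r F true t s y z ξ v)) ∧
  (∀ G ∈ FFam r F, ∀ t : ℝ, 0 ≤ t → t ≤ T → ∀ z ∈ Zdom,
    pNorm r ρ₀ α 0 t (fun s y => G t s y z) ≤ K) ∧
  (∀ G ∈ FFam r F, ∀ (t s : ℝ) (y : Rd d), 0 ≤ s → s ≤ t → t ≤ T →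
    ∀ z₁ ∈ Zdom, ∀ z₂ ∈ Zdom, |G t s y z₁ - G t s y z₂| ≤ L * znorm (z₁ - z₂))

/-- The standing conditions (i)–(iii) on a nonlinearity `F` over a given `z`-domain. -/
def StandingNL {d m : ℕ} (r : ℕ) (T ρ₀ α : ℝ) (Zdom : Set (Zsp d m r))
    (F : ℝ → ℝ → Rd d → Zsp d m r → Fin m → ℝ) : Prop :=
  ∃ (lam : ℝ) (K : ℝ≥0∞) (L : ℝ), 0 < lam ∧ K < ⊤ ∧ 0 < L ∧
    StandingNLC r T ρ₀ α Zdom lam K L F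

/-- `u` solves the nonlocal fully nonlinear system `∂_s u = F(u)`, `u(t,0,y) = g(t,y)`
on `Δ[0,δ] × ℝ^d` (with `F` defined on the whole space `Z`). -/
def SolvesNLF {d m : ℕ} (r : ℕ) (δ : ℝ) (F : ℝ → ℝ → Rd d → Zsp d m r → Fin m → ℝ)
    (g : ℝ → Rd d → Fin m → ℝ) (u : ℝ → ℝ → Rd d → Fin m → ℝ) : Prop :=
  (∀ (t s : ℝ) (y : Rd d), 0 ≤ s → s ≤ t → t ≤ δ → ∀ a : Fin m,
    dSu u t s y a = F t s y (derivPair r u t s y) a) ∧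
  (∀ t : ℝ, 0 ≤ t → t ≤ δ → ∀ (y : Rd d) (a : Fin m), u t 0 y a = g t y a)

/-- `u` solves the nonlocal fully nonlinear system on `Δ[0,δ] × ℝ^d`, with derivative
tuple ranging in the open ball `B(z₀, R₀)`. -/
def SolvesNLBall {d m : ℕ} (r : ℕ) (δ : ℝ) (z0 : Zsp d m r) (R₀ : ℝ)
    (F : ℝ → ℝ → Rd d → Zsp d m r → Fin m → ℝ)
    (g : ℝ → Rd d → Fin m → ℝ) (u : ℝ → ℝ → Rd d → Fin m → ℝ) : Prop :=
  (∀ (t s : ℝ) (y : Rd d), 0 ≤ s → s ≤ t → t ≤ δ →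
    znorm (derivPair r u t s y - z0) < R₀ ∧
    ∀ a : Fin m, dSu u t s y a = F t s y (derivPair r u t s y) a) ∧
  (∀ t : ℝ, 0 ≤ t → t ≤ δ → ∀ (y : Rd d) (a : Fin m), u t 0 y a = g t y a)

/-- As `SolvesNLBall`, but with the closed ball `B̄(z₀, R₀)`. -/
def SolvesNLBallC {d m : ℕ} (r : ℕ) (δ : ℝ) (z0 : Zsp d m r) (R₀ : ℝ)
    (F : ℝ → ℝ → Rd d → Zsp d m r → Fin m → ℝ)
    (g : ℝ → Rd d → Fin m → ℝ) (u : ℝ → ℝ → Rd d → Fin m → ℝ) : Prop :=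
  (∀ (t s : ℝ) (y : Rd d), 0 ≤ s → s ≤ t → t ≤ δ →
    znorm (derivPair r u t s y - z0) ≤ R₀ ∧
    ∀ a : Fin m, dSu u t s y a = F t s y (derivPair r u t s y) a) ∧
  (∀ t : ℝ, 0 ≤ t → t ≤ δ → ∀ (y : Rd d) (a : Fin m), u t 0 y a = g t y a)

/-- Time reversal `v(t,s,y) = u(T−t, T−s, y)`. -/
def revT {d m : ℕ} (T : ℝ) (u : ℝ → ℝ → Rd d → Fin m → ℝ) :
    ℝ → ℝ → Rd d → Fin m → ℝ :=
  fun t s y b => u (T - t) (T - s) y b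


/-! ### Nonlocal quasilinear systems -/

/-- Multi-indices of length `≤ 2r − 1`. -/
abbrev QIdx (d r : ℕ) := Σ j : Fin (2 * r), Fin (j : ℕ) → Fin d

/-- The space `W` of tuples `w = (w^b_I)` with `|I| ≤ 2r − 1`. -/
abbrev Wsp (d m r : ℕ) := QIdx d r × Fin m → ℝ

/-- Euclidean norm on `W`. -/
def wnorm {d m r : ℕ} (w : Wsp d m r) : ℝ := Real.sqrt (∑ c, w c ^ 2)

/-- Tuple of spatial derivatives of `u` of order `≤ 2r − 1` at `(t,s,y)`. -/
def wTuple {d m : ℕ} (r : ℕ) (u : ℝ → ℝ → Rd d → Fin m → ℝ) (t s : ℝ) (y : Rd d) :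
    Wsp d m r :=
  fun c => mderiv (c.1.1 : ℕ) c.1.2 (fun y' => u t s y' c.2) y

/-- Top-order coefficients `A^{aI}_b(s,y)` with `|I| = 2r`. -/
abbrev QCoeff (d m r : ℕ) := Fin m → (Fin (2 * r) → Fin d) → Fin m → ℝ → Rd d → ℝ

/-- `u` solves the nonlocal quasilinear system on `Δ[0,T] × ℝ^d`. -/
def SolvesQL {d m : ℕ} (r : ℕ) (T : ℝ) (A2 : QCoeff d m r)
    (Q : ℝ → ℝ → Rd d → Wsp d m r → Wsp d m r → Fin m → ℝ)
    (g : ℝ → Rd d → Fin m → ℝ) (u : ℝ → ℝ → Rd d → Fin m → ℝ) : Prop :=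
  (∀ (t s : ℝ) (y : Rd d), 0 ≤ s → s ≤ t → t ≤ T → ∀ a : Fin m,
    dSu u t s y a =
      (∑ I : Fin (2 * r) → Fin d, ∑ b : Fin m,
        A2 a I b s y * mderiv (2 * r) I (fun y' => u t s y' b) y) +
      Q t s y (wTuple r u t s y) (wTuple r u s s y) a) ∧
  (∀ t : ℝ, 0 ≤ t → t ≤ T → ∀ (y : Rd d) (a : Fin m), u t 0 y a = g t y a)

/-- Partial derivative of `Q` in a coordinate of the local argument. -/
def dLoc {d m r : ℕ} (G : ℝ → ℝ → Rd d → Wsp d m r → Wsp d m r → ℝ)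
    (c : QIdx d r × Fin m) : ℝ → ℝ → Rd d → Wsp d m r → Wsp d m r → ℝ :=
  fun t s y w wb => fderiv ℝ (fun w' => G t s y w' wb) w (Pi.single c 1)

/-- Partial derivative of `Q` in a coordinate of the diagonal argument. -/
def dDiag {d m r : ℕ} (G : ℝ → ℝ → Rd d → Wsp d m r → Wsp d m r → ℝ)
    (c : QIdx d r × Fin m) : ℝ → ℝ → Rd d → Wsp d m r → Wsp d m r → ℝ :=
  fun t s y w wb => fderiv ℝ (fun wb' => G t s y w wb') wb (Pi.single c 1)

/-- Partial derivative of `Q` in `t`. -/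
def dtQ {d m r : ℕ} (G : ℝ → ℝ → Rd d → Wsp d m r → Wsp d m r → ℝ) :
    ℝ → ℝ → Rd d → Wsp d m r → Wsp d m r → ℝ :=
  fun t s y w wb => deriv (fun t' => G t' s y w wb) t

/-- The family consisting of `Q`, its first-order partial derivatives in `t` and in the
local and diagonal argument tuples, and its second-order partial derivatives in the pairs
`(t, local)`, `(t, diagonal)`, `(local, local)`, `(local, diagonal)`, `(diagonal, local)`. -/
def QFam {d m r : ℕ} (Q : ℝ → ℝ → Rd d → Wsp d m r → Wsp d m r → Fin m → ℝ) :
    Set (ℝ → ℝ → Rd d → Wsp d m r → Wsp d m r → ℝ) :=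
  {G | (∃ a, G = fun t s y w wb => Q t s y w wb a) ∨
    (∃ a, G = dtQ (fun t s y w wb => Q t s y w wb a)) ∨
    (∃ a c, G = dLoc (fun t s y w wb => Q t s y w wb a) c) ∨
    (∃ a c, G = dDiag (fun t s y w wb => Q t s y w wb a) c) ∨
    (∃ a c, G = dtQ (dLoc (fun t s y w wb => Q t s y w wb a) c)) ∨
    (∃ a c, G = dtQ (dDiag (fun t s y w wb => Q t s y w wb a) c)) ∨
    (∃ a c c', G = dLoc (dLoc (fun t s y w wb => Q t s y w wb a) c) c') ∨
    (∃ a c c', G = dDiag (dLoc (fun t s y w wb => Q t s y w wb a) c) c') ∨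
    (∃ a c c', G = dLoc (dDiag (fun t s y w wb => Q t s y w wb a) c) c')}

/-! ### Weighted norms and spaces -/

/-- The quadratic form `⟨S y, y⟩`. -/
def quadS {d : ℕ} (S : Matrix (Fin d) (Fin d) ℝ) (y : Rd d) : ℝ :=
  ∑ i, ∑ j, S i j * y i * y j

/-- The exponential weight `ρ(y) = exp(1 + ⟨S y, y⟩^{1/2})`. -/
def wt {d : ℕ} (S : Matrix (Fin d) (Fin d) ℝ) (y : Rd d) : ℝ :=
  Real.exp (1 + Real.sqrt (quadS S y))

/-- `S` is symmetric positive definite with eigenvalues in `[lam1, lam2]`, `lam1 > 0`. -/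
def SpecIn {d : ℕ} (S : Matrix (Fin d) (Fin d) ℝ) (lam1 lam2 : ℝ) : Prop :=
  S.IsSymm ∧ 0 < lam1 ∧ lam1 ≤ lam2 ∧
    ∀ y : Rd d, lam1 * ‖y‖ ^ 2 ≤ quadS S y ∧ quadS S y ≤ lam2 * ‖y‖ ^ 2

/-- Division by the weight. -/
def wdiv {d : ℕ} (S : Matrix (Fin d) (Fin d) ℝ) (φ : ℝ → Rd d → ℝ) : ℝ → Rd d → ℝ :=
  fun s y => φ s y / wt S y

/-- The weighted parabolic Hölder norm `|ψ|^{2,(l)}_{ρ,[a,b] × ℝ^d}` (all derivatives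
divided by the weight). -/
def pNormW {d : ℕ} (S : Matrix (Fin d) (Fin d) ℝ) (r : ℕ) (ρ₀ l a b : ℝ)
    (ψ : ℝ → Rd d → ℝ) : ℝ≥0∞ :=
  (∑ h ∈ Finset.range (⌊l⌋₊ + 1), ∑ j ∈ Finset.range (⌊l⌋₊ + 1),
    if 2 * r * h + j ≤ ⌊l⌋₊ then
      ∑ I : Fin j → Fin d, supA a b (wdiv S (mixD h j I ψ)) else 0) +
  (∑ h ∈ Finset.range (⌊l⌋₊ + 1), ∑ j ∈ Finset.range (⌊l⌋₊ + 1),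
    if 2 * r * h + j = ⌊l⌋₊ then
      ∑ I : Fin j → Fin d, hY ρ₀ (l - (⌊l⌋₊ : ℝ)) a b (wdiv S (mixD h j I ψ))
    else 0) +
  (∑ h ∈ Finset.range (⌊l⌋₊ + 1), ∑ j ∈ Finset.range (⌊l⌋₊ + 1),
    if 0 < l - ((2 * r * h + j : ℕ) : ℝ) ∧ l - ((2 * r * h + j : ℕ) : ℝ) < (2 * r : ℝ) then
      ∑ I : Fin j → Fin d,
        hS ρ₀ ((l - ((2 * r * h + j : ℕ) : ℝ)) / (2 * r : ℝ)) a b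
          (wdiv S (mixD h j I ψ))
    else 0)

/-- The `min`-weighted spatial Hölder seminorm appearing in the third weighted norm. -/
def hYmin {d : ℕ} (S : Matrix (Fin d) (Fin d) ℝ) (ρ₀ β a b : ℝ)
    (φ : ℝ → Rd d → ℝ) : ℝ≥0∞ :=
  ⨆ s ∈ Icc a b, ⨆ y : Rd d, ⨆ y' : Rd d,
    ⨆ (_ : 0 < dist y y' ∧ dist y y' ≤ ρ₀),
      ENNReal.ofReal (|φ s y - φ s y'| / dist y y' ^ β * min (wt S y)⁻¹ (wt S y')⁻¹)

/-- The weighted parabolic Hölder norm `|ψ|^{3,(l)}_{ρ,[a,b] × ℝ^d}`. -/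
def pNormW3 {d : ℕ} (S : Matrix (Fin d) (Fin d) ℝ) (r : ℕ) (ρ₀ l a b : ℝ)
    (ψ : ℝ → Rd d → ℝ) : ℝ≥0∞ :=
  (∑ h ∈ Finset.range (⌊l⌋₊ + 1), ∑ j ∈ Finset.range (⌊l⌋₊ + 1),
    if 2 * r * h + j ≤ ⌊l⌋₊ then
      ∑ I : Fin j → Fin d, supA a b (wdiv S (mixD h j I ψ)) else 0) +
  (∑ h ∈ Finset.range (⌊l⌋₊ + 1), ∑ j ∈ Finset.range (⌊l⌋₊ + 1),
    if 2 * r * h + j = ⌊l⌋₊ then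
      ∑ I : Fin j → Fin d, hYmin S ρ₀ (l - (⌊l⌋₊ : ℝ)) a b (mixD h j I ψ)
    else 0) +
  (∑ h ∈ Finset.range (⌊l⌋₊ + 1), ∑ j ∈ Finset.range (⌊l⌋₊ + 1),
    if 0 < l - ((2 * r * h + j : ℕ) : ℝ) ∧ l - ((2 * r * h + j : ℕ) : ℝ) < (2 * r : ℝ) then
      ∑ I : Fin j → Fin d,
        hS ρ₀ ((l - ((2 * r * h + j : ℕ) : ℝ)) / (2 * r : ℝ)) a b
          (wdiv S (mixD h j I ψ))
    else 0)

/-- Weighted vector norm. -/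
def pNormVW {d m : ℕ} (S : Matrix (Fin d) (Fin d) ℝ) (r : ℕ) (ρ₀ l a b : ℝ)
    (ψ : ℝ → Rd d → Fin m → ℝ) : ℝ≥0∞ :=
  ∑ i : Fin m, pNormW S r ρ₀ l a b (fun s y => ψ s y i)

/-- The weighted norm `[u]^{(l)}_{ρ,[0,δ]}`. -/
def normThetaW {d m : ℕ} (S : Matrix (Fin d) (Fin d) ℝ) (r : ℕ) (ρ₀ l δ : ℝ)
    (u : ℝ → ℝ → Rd d → Fin m → ℝ) : ℝ≥0∞ :=
  ⨆ t ∈ Icc (0 : ℝ) δ, pNormVW S r ρ₀ l 0 t (u t)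

/-- The weighted norm `‖u‖^{(l)}_{ρ,[0,δ]}`. -/
def normOmegaW {d m : ℕ} (S : Matrix (Fin d) (Fin d) ℝ) (r : ℕ) (ρ₀ l δ : ℝ)
    (u : ℝ → ℝ → Rd d → Fin m → ℝ) : ℝ≥0∞ :=
  ⨆ t ∈ Icc (0 : ℝ) δ, (pNormVW S r ρ₀ l 0 t (u t) + pNormVW S r ρ₀ l 0 t (dT u t))

/-- Membership in the weighted space `Θ^{(l)}_{ρ,[0,δ]}`. -/
def memThetaW {d m : ℕ} (S : Matrix (Fin d) (Fin d) ℝ) (r : ℕ) (ρ₀ l δ : ℝ)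
    (u : ℝ → ℝ → Rd d → Fin m → ℝ) : Prop :=
  ContinuousOn (fun p : ℝ × ℝ × Rd d => fun b => u p.1 p.2.1 p.2.2 b) (DeltaDom d δ) ∧
  normThetaW S r ρ₀ l δ u < ⊤

/-- Membership in the weighted space `Ω^{(l)}_{ρ,[0,δ]}`. -/
def memOmegaW {d m : ℕ} (S : Matrix (Fin d) (Fin d) ℝ) (r : ℕ) (ρ₀ l δ : ℝ)
    (u : ℝ → ℝ → Rd d → Fin m → ℝ) : Prop :=
  ContinuousOn (fun p : ℝ × ℝ × Rd d => fun b => u p.1 p.2.1 p.2.2 b) (DeltaDom d δ) ∧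
  (∀ (t s : ℝ) (y : Rd d) (b : Fin m), (t, s, y) ∈ DeltaDom d δ →
    DifferentiableAt ℝ (fun t' => u t' s y b) t) ∧
  ContinuousOn (fun p : ℝ × ℝ × Rd d => fun b => dT u p.1 p.2.1 p.2.2 b) (DeltaDom d δ) ∧
  normOmegaW S r ρ₀ l δ u < ⊤

/-- An initial datum as an element of the weighted space `Ω^{(l)}_{ρ,[0,δ]}`. -/
def memOmegaInitW {d m : ℕ} (S : Matrix (Fin d) (Fin d) ℝ) (r : ℕ) (ρ₀ l δ : ℝ)
    (g : ℝ → Rd d → Fin m → ℝ) : Prop :=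
  memOmegaW S r ρ₀ l δ (fun t _ y => g t y)

/-- The pair `(F, g)` is appropriate (Definition of appropriateness, conditions (a)–(e)). -/
def Appropriate {d m : ℕ} (r : ℕ) (T ρ₀ α : ℝ) (S : Matrix (Fin d) (Fin d) ℝ)
    (F : ℝ → ℝ → Rd d → Zsp d m r → Fin m → ℝ)
    (g : ℝ → Rd d → Fin m → ℝ) : Prop :=
  ∃ δ R C lam : ℝ, 0 < δ ∧ δ ≤ T ∧ 0 < R ∧ 0 < C ∧ 0 < lam ∧
    -- (c) ellipticity at the derivative tuple of `g`
    (∀ (t s : ℝ) (y : Rd d), 0 ≤ s → s ≤ t → t ≤ δ → ∀ (ξ : Rd d) (v : Fin m → ℝ),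
      (lam * ‖ξ‖ ^ (2 * r) * (∑ a, v a ^ 2) ≤
        (-1 : ℝ) ^ (r - 1) * ellipSum r F false t s y (gPair r g t 0 y) ξ v) ∧
      (lam * ‖ξ‖ ^ (2 * r) * (∑ a, v a ^ 2) ≤
        (-1 : ℝ) ^ (r - 1) * ellipSum r F true t s y (gPair r g t 0 y) ξ v)) ∧
    ∀ u : ℝ → ℝ → Rd d → Fin m → ℝ,
      memOmegaW S r ρ₀ ((2 * r : ℝ) + α) δ u →
      (∀ t : ℝ, 0 ≤ t → t ≤ δ → ∀ (y : Rd d) (b : Fin m), u t 0 y b = g t y b) →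
      normOmegaW S r ρ₀ ((2 * r : ℝ) + α) δ (fun t s y b => u t s y b - g t y b) ≤
        ENNReal.ofReal R →
      -- (a)
      ((memOmegaW S r ρ₀ α δ (Fapp r F u) ∧ memThetaW S r ρ₀ α δ (dT (Fapp r F u))) ∧
      -- (b)
      (∀ (a : Fin m) (c : ZIdx d m r),
        memOmegaS r ρ₀ α δ (fun t s y =>
          dz (fun t' s' y' z' => F t' s' y' z' a) c t s y (derivPair r u t s y))) ∧
      -- (d)
      (∀ (a : Fin m) (c : ZIdx d m r) (t s s' : ℝ) (y y' : Rd d),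
        0 ≤ s → s ≤ t → 0 ≤ s' → s' ≤ t → t ≤ δ →
        (|dz (fun t' s' y'' z' => F t' s' y'' z' a) c t s' y' (derivPair r u t s' y') -
            dz (fun t' s' y'' z' => F t' s' y'' z' a) c t s y (derivPair r u t s y)| ≤
          C * (|s - s'| ^ (α / 2) + dist y y' ^ α)) ∧
        (|dtZ (dz (fun t' s' y'' z' => F t' s' y'' z' a) c) t s' y'
              (derivPair r u t s' y') -
            dtZ (dz (fun t' s' y'' z' => F t' s' y'' z' a) c) t s y
              (derivPair r u t s y)| ≤
          C * (|s - s'| ^ (α / 2) + dist y y' ^ α))) ∧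
      -- (e)
      (∀ (a cc : Fin m) (c : ZIdx d m r) (J : MIdx d r) (t s s' : ℝ) (y y' : Rd d),
        0 ≤ s → s ≤ t → 0 ≤ s' → s' ≤ t → t ≤ δ →
        |dz (dz (fun t' s' y'' z' => F t' s' y'' z' a) c) ((0 : Fin 2), J, cc) t s' y'
            (derivPair r u t s' y') *
            mderiv (J.1 : ℕ) J.2 (fun y'' => dT u t s' y'' cc) y' -
          dz (dz (fun t' s' y'' z' => F t' s' y'' z' a) c) ((0 : Fin 2), J, cc) t s y
            (derivPair r u t s y) *
            mderiv (J.1 : ℕ) J.2 (fun y'' => dT u t s y'' cc) y| ≤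
          C * (|s - s'| ^ (α / 2) + dist y y' ^ α)))


/-! ### Auxiliary lemmas for Statement 10 -/

/-- The bilinear form associated with `S`. -/
def bilinS {d : ℕ} (S : Matrix (Fin d) (Fin d) ℝ) (u v : Rd d) : ℝ :=
  ∑ i, ∑ j, S i j * u i * v j

lemma bilinS_symm {d : ℕ} {S : Matrix (Fin d) (Fin d) ℝ} (hS : S.IsSymm) (u v : Rd d) :
    bilinS S u v = bilinS S v u := by
  unfold bilinS
  rw [Finset.sum_comm]
  refine Finset.sum_congr rfl fun i _ => Finset.sum_congr rfl fun j _ => ?_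
  rw [hS.apply i j]; ring

lemma quadS_add {d : ℕ} {S : Matrix (Fin d) (Fin d) ℝ} (hS : S.IsSymm) (u v : Rd d) :
    quadS S (u + v) = quadS S u + 2 * bilinS S u v + quadS S v := by
  have hsym := bilinS_symm hS v u
  simp only [quadS, bilinS] at *
  have h : ∀ i j : Fin d, S i j * (u + v) i * (u + v) j
      = S i j * u i * u j + S i j * u i * v j + S i j * v i * u j + S i j * v i * v j := by
    intro i j
    have hu : (u + v) i = u i + v i := rfl
    have hv : (u + v) j = u j + v j := rfl
    rw [hu, hv]; ring
  simp only [h, Finset.sum_add_distrib]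
  linarith

lemma quadS_smul {d : ℕ} {S : Matrix (Fin d) (Fin d) ℝ} (x : ℝ) (v : Rd d) :
    quadS S (x • v) = x ^ 2 * quadS S v := by
  simp only [quadS, Finset.mul_sum]
  refine Finset.sum_congr rfl fun i _ => Finset.sum_congr rfl fun j _ => ?_
  have h1 : (x • v) i = x * v i := rfl
  have h2 : (x • v) j = x * v j := rfl
  rw [h1, h2]; ring

lemma bilinS_smul {d : ℕ} {S : Matrix (Fin d) (Fin d) ℝ} (x : ℝ) (u v : Rd d) :
    bilinS S u (x • v) = x * bilinS S u v := by
  simp only [bilinS, Finset.mul_sum]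
  refine Finset.sum_congr rfl fun i _ => Finset.sum_congr rfl fun j _ => ?_
  have h2 : (x • v) j = x * v j := rfl
  rw [h2]; ring

lemma bilinS_sq_le {d : ℕ} {S : Matrix (Fin d) (Fin d) ℝ} (hS : S.IsSymm)
    (hq : ∀ w : Rd d, 0 ≤ quadS S w) (u v : Rd d) :
    bilinS S u v ^ 2 ≤ quadS S u * quadS S v := by
  have h : ∀ x : ℝ, 0 ≤ quadS S v * (x * x) + (2 * bilinS S u v) * x + quadS S u := by
    intro x
    have h0 := hq (u + x • v)
    rw [quadS_add hS, bilinS_smul, quadS_smul] at h0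
    nlinarith [h0]
  have hD := discrim_le_zero h
  unfold discrim at hD
  nlinarith [hD]

lemma sqrt_quad_diff_le {d : ℕ} {S : Matrix (Fin d) (Fin d) ℝ} {lam1 lam2 : ℝ}
    (hS : SpecIn S lam1 lam2) (y y' : Rd d) :
    Real.sqrt (quadS S y') - Real.sqrt (quadS S y) ≤ Real.sqrt lam2 * dist y y' := by
  obtain ⟨hsym, hl1, hl12, hb⟩ := hS
  have hq : ∀ w : Rd d, 0 ≤ quadS S w := fun w => le_trans (by positivity) (hb w).1
  set δ : Rd d := y' - y with hδ
  have hy' : y' = y + δ := by rw [hδ]; abel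
  have hB : bilinS S y δ ≤ Real.sqrt (quadS S y) * Real.sqrt (quadS S δ) := by
    have h1 : bilinS S y δ ≤ |bilinS S y δ| := le_abs_self _
    have h2 : |bilinS S y δ| = Real.sqrt (bilinS S y δ ^ 2) := (Real.sqrt_sq_eq_abs _).symm
    have h3 : Real.sqrt (bilinS S y δ ^ 2) ≤ Real.sqrt (quadS S y * quadS S δ) :=
      Real.sqrt_le_sqrt (bilinS_sq_le hsym hq y δ)
    rw [Real.sqrt_mul (hq y)] at h3
    linarith
  have hexp : quadS S y' ≤ (Real.sqrt (quadS S y) + Real.sqrt (quadS S δ)) ^ 2 := by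
    rw [hy', quadS_add hsym]
    have hy2 : Real.sqrt (quadS S y) ^ 2 = quadS S y := Real.sq_sqrt (hq y)
    have hd2 : Real.sqrt (quadS S δ) ^ 2 = quadS S δ := Real.sq_sqrt (hq δ)
    nlinarith
  have h4 : Real.sqrt (quadS S y') ≤ Real.sqrt (quadS S y) + Real.sqrt (quadS S δ) := by
    calc Real.sqrt (quadS S y')
        ≤ Real.sqrt ((Real.sqrt (quadS S y) + Real.sqrt (quadS S δ)) ^ 2) :=
          Real.sqrt_le_sqrt hexp
      _ = _ := Real.sqrt_sq (by positivity)
  have h5 : Real.sqrt (quadS S δ) ≤ Real.sqrt lam2 * ‖δ‖ := by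
    calc Real.sqrt (quadS S δ) ≤ Real.sqrt (lam2 * ‖δ‖ ^ 2) := Real.sqrt_le_sqrt (hb δ).2
      _ = Real.sqrt lam2 * ‖δ‖ := by
          rw [Real.sqrt_mul (le_trans hl1.le hl12), Real.sqrt_sq (norm_nonneg _)]
  have hdist : dist y y' = ‖δ‖ := by rw [dist_eq_norm, hδ, norm_sub_rev]
  rw [hdist]; linarith

lemma wt_pos {d : ℕ} (S : Matrix (Fin d) (Fin d) ℝ) (y : Rd d) : 0 < wt S y :=
  Real.exp_pos _

lemma wt_ratio {d : ℕ} {S : Matrix (Fin d) (Fin d) ℝ} {lam1 lam2 : ℝ} (α : ℝ)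
    (hS : SpecIn S lam1 lam2) {y y' : Rd d}
    (hle : quadS S y ≤ quadS S y') (hd0 : 0 < dist y y') (hd1 : dist y y' ≤ 1)
    (hα0 : 0 < α) (hα1 : α ≤ 1) :
    wt S y ≤ wt S y' ∧
      1 - wt S y / wt S y' ≤ Real.sqrt (max lam2 1) * dist y y' ^ α := by
  have hsq : Real.sqrt (quadS S y) ≤ Real.sqrt (quadS S y') := Real.sqrt_le_sqrt hle
  constructor
  · exact Real.exp_le_exp.mpr (by linarith)
  · have hratio : wt S y / wt S y'
        = Real.exp (Real.sqrt (quadS S y) - Real.sqrt (quadS S y')) := by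
      rw [wt, wt, ← Real.exp_sub]; ring_nf
    have h1 : 1 - wt S y / wt S y' ≤ Real.sqrt (quadS S y') - Real.sqrt (quadS S y) := by
      rw [hratio]
      have := Real.add_one_le_exp (Real.sqrt (quadS S y) - Real.sqrt (quadS S y'))
      linarith
    have h2 := sqrt_quad_diff_le hS y y'
    have h3 : Real.sqrt lam2 ≤ Real.sqrt (max lam2 1) :=
      Real.sqrt_le_sqrt (le_max_left _ _)
    have h4 : dist y y' ≤ dist y y' ^ α := by
      calc dist y y' = dist y y' ^ (1 : ℝ) := (Real.rpow_one _).symm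
        _ ≤ dist y y' ^ α := Real.rpow_le_rpow_of_exponent_ge hd0 hd1 hα1
    have h5 : Real.sqrt lam2 * dist y y' ≤ Real.sqrt (max lam2 1) * dist y y' ^ α := by
      have := mul_le_mul h3 h4 hd0.le (Real.sqrt_nonneg _)
      linarith
    linarith

lemma ineq1 {a b p p' t M H C : ℝ} (hp : 0 < p) (hp' : 0 < p') (hpp' : p ≤ p')
    (ht : 0 ≤ t) (hM : 0 ≤ M) (hH : 0 ≤ H) (hC : 0 ≤ C)
    (hb : |b| ≤ M * p') (hhol : |a / p - b / p'| ≤ H * t)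
    (hr : 1 - p / p' ≤ C * t) :
    |a - b| / p' ≤ (C * M + H) * t := by
  rw [div_le_iff₀ hp']
  have key : a - b = (a / p - b / p') * p + b * (p / p' - 1) := by
    field_simp; ring
  have hle1 : p / p' - 1 ≤ 0 := by
    rw [sub_nonpos]; exact (div_le_one hp').mpr hpp'
  have h1 : |a - b| ≤ |a / p - b / p'| * p + |b| * (1 - p / p') := by
    have habs := abs_add_le ((a / p - b / p') * p) (b * (p / p' - 1))
    rw [← key, abs_mul, abs_mul, abs_of_pos hp, abs_of_nonpos hle1] at habs
    have e : |b| * -(p / p' - 1) = |b| * (1 - p / p') := by ring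
    rw [e] at habs
    exact habs
  have h2 : |a / p - b / p'| * p ≤ H * t * p' :=
    mul_le_mul hhol hpp' hp.le (by positivity)
  have h3 : |b| * (1 - p / p') ≤ M * p' * (C * t) :=
    mul_le_mul hb hr (sub_nonneg.mpr ((div_le_one hp').mpr hpp')) (by positivity)
  nlinarith

lemma ineq2 {a b p p' t M H C : ℝ} (hp : 0 < p) (hp' : 0 < p') (hpp' : p ≤ p')
    (ht : 0 ≤ t) (hM : 0 ≤ M) (hH : 0 ≤ H)
    (ha : |a| ≤ M * p) (hhol : |a - b| ≤ H * t)
    (hr : 1 - p / p' ≤ C * t) :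
    |a / p - b / p'| ≤ C * M * t + H * t * p'⁻¹ := by
  have h0 : 0 ≤ 1 / p - 1 / p' := sub_nonneg.mpr (one_div_le_one_div_of_le hp hpp')
  have key : a / p - b / p' = (a - b) / p' + a * (1 / p - 1 / p') := by
    field_simp; ring
  have h1 : |a / p - b / p'| ≤ |a - b| / p' + |a| * (1 / p - 1 / p') := by
    calc |a / p - b / p'| ≤ |(a - b) / p'| + |a * (1 / p - 1 / p')| := by
          rw [key]; exact abs_add_le _ _
      _ = |a - b| / p' + |a| * |1 / p - 1 / p'| := by
          rw [abs_div, abs_of_pos hp', abs_mul]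
      _ = _ := by rw [abs_of_nonneg h0]
  have h2 : |a - b| / p' ≤ H * t * p'⁻¹ := by
    rw [div_eq_mul_inv]
    exact mul_le_mul_of_nonneg_right hhol (inv_nonneg.mpr hp'.le)
  have h3 : |a| * (1 / p - 1 / p') ≤ C * M * t := by
    have e : M * p * (1 / p - 1 / p') = M * (1 - p / p') := by field_simp
    calc |a| * (1 / p - 1 / p') ≤ M * p * (1 / p - 1 / p') :=
          mul_le_mul_of_nonneg_right ha h0
      _ = M * (1 - p / p') := e
      _ ≤ M * (C * t) := mul_le_mul_of_nonneg_left hr hM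
      _ = C * M * t := by ring
  linarith

/-- Pointwise weighted Hölder estimates for the exponential weight
`ρ(y) = exp(1 + ⟨Sy,y⟩^{1/2})`, with a constant depending only on `λ̄` and `α`:
(i) `|f(y) − f(y′)|/ρ(y′) ≤ (C M + H)|y−y′|^α` whenever `|f| ≤ M ρ`, `f/ρ` is
`(H,α)`-Hölder, `0 < |y−y′| ≤ 1` and `⟨Sy,y⟩ ≤ ⟨Sy′,y′⟩`;
(ii) `|f(y)/ρ(y) − f(y′)/ρ(y′)| ≤ C M |y−y′|^α + H |y−y′|^α min(ρ(y)⁻¹, ρ(y′)⁻¹)`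
whenever `|f| ≤ M ρ`, `f` is `(H,α)`-Hölder and `0 < |y−y′| ≤ 1`. -/
theorem stmt10_weighted_pointwise_estimates
    (d : ℕ) (hd : 0 < d) (α : ℝ) (hα0 : 0 < α) (hα1 : α < 1) (lam2 : ℝ) :
    ∃ C : ℝ, 0 < C ∧
      (∀ (S : Matrix (Fin d) (Fin d) ℝ) (lam1 : ℝ), SpecIn S lam1 lam2 →
        ∀ (f : Rd d → ℝ) (M H : ℝ), 0 ≤ M → 0 ≤ H →
        (∀ z : Rd d, |f z| ≤ M * wt S z) →
        (∀ z z' : Rd d, 0 < dist z z' → dist z z' ≤ 1 →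
          |f z / wt S z - f z' / wt S z'| ≤ H * dist z z' ^ α) →
        ∀ y y' : Rd d, 0 < dist y y' → dist y y' ≤ 1 → quadS S y ≤ quadS S y' →
          |f y - f y'| / wt S y' ≤ (C * M + H) * dist y y' ^ α) ∧
      (∀ (S : Matrix (Fin d) (Fin d) ℝ) (lam1 : ℝ), SpecIn S lam1 lam2 →
        ∀ (f : Rd d → ℝ) (M H : ℝ), 0 ≤ M → 0 ≤ H →
        (∀ z : Rd d, |f z| ≤ M * wt S z) →
        (∀ z z' : Rd d, 0 < dist z z' → dist z z' ≤ 1 →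
          |f z - f z'| ≤ H * dist z z' ^ α) →
        ∀ y y' : Rd d, 0 < dist y y' → dist y y' ≤ 1 →
          |f y / wt S y - f y' / wt S y'| ≤
            C * M * dist y y' ^ α +
              H * dist y y' ^ α * min (wt S y)⁻¹ (wt S y')⁻¹) := by
  refine ⟨Real.sqrt (max lam2 1),
    Real.sqrt_pos.mpr (lt_of_lt_of_le zero_lt_one (le_max_right _ _)), ?_, ?_⟩
  · intro S lam1 hSpec f M H hM hH hbound hhol y y' hd0 hd1 hq
    obtain ⟨hmono, hr⟩ := wt_ratio α hSpec hq hd0 hd1 hα0 hα1.le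
    exact ineq1 (wt_pos S y) (wt_pos S y') hmono (Real.rpow_nonneg dist_nonneg _)
      hM hH (Real.sqrt_nonneg _) (hbound y') (hhol y y' hd0 hd1) hr
  · intro S lam1 hSpec f M H hM hH hbound hhol y y' hd0 hd1
    have ht : (0 : ℝ) ≤ dist y y' ^ α := Real.rpow_nonneg dist_nonneg _
    rcases le_total (quadS S y) (quadS S y') with hq | hq
    · obtain ⟨hmono, hr⟩ := wt_ratio α hSpec hq hd0 hd1 hα0 hα1.le
      have hmin : min (wt S y)⁻¹ (wt S y')⁻¹ = (wt S y')⁻¹ :=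
        min_eq_right (inv_anti₀ (wt_pos S y) hmono)
      rw [hmin]
      exact ineq2 (wt_pos S y) (wt_pos S y') hmono ht hM hH (hbound y)
        (hhol y y' hd0 hd1) hr
    · have hd0' : 0 < dist y' y := by rwa [dist_comm]
      have hd1' : dist y' y ≤ 1 := by rwa [dist_comm]
      obtain ⟨hmono, hr⟩ := wt_ratio α hSpec hq hd0' hd1' hα0 hα1.le
      have hmin : min (wt S y)⁻¹ (wt S y')⁻¹ = (wt S y)⁻¹ :=
        min_eq_left (inv_anti₀ (wt_pos S y') hmono)
      rw [hmin, abs_sub_comm]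
      have ht' : (0 : ℝ) ≤ dist y' y ^ α := Real.rpow_nonneg dist_nonneg _
      have h := ineq2 (wt_pos S y') (wt_pos S y) hmono ht' hM hH (hbound y')
        (hhol y' y hd0' hd1') hr
      rwa [dist_comm y' y] at h

end Nonlocal
end
end

section
/- Suppose φ̄ = (φ̄^1,…,φ̄^m) : [0,T] → (0,∞)^m is continuous and satisfies, for every a ∈ {1,…,m} and every s ∈ [0,T], the nonlinear integral equation φ̄^a(s) = exp(∫_s^T [k^a(s,τ) − Σ_{b≤m} β·φ̄^b(τ)^{1/(β−1)}] dτ)·ḡ^a(s) + ∫_s^T exp(∫_s^σ [k^a(s,τ) − Σ_{b≤m} β·φ̄^b(τ)^{1/(β−1)}] dτ)·(Σ_{b≤m} v̄^{ab}(s,σ)·φ̄^b(σ)^{β/(β−1)}) dσ. Then for every a ∈ {1,…,m} and every s ∈ [0,T]: g₀·e^{−γ(T−s)} ≤ φ̄^a(s) ≤ exp(∫_s^T k^a(s,τ)dτ)·ḡ^a(s) + (g₀·e^{−γT})^{β/(β−1)}·∫_s^T exp(∫_s^σ k^a(s,τ)dτ)·(Σ_{b≤m} v̄^{ab}(s,σ))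 dσ. In particular, φ̄ is bounded above and bounded below away from zero, uniformly on [0,T]. -/
open Set MeasureTheory

noncomputable section

private lemma stmt18_integrable_of_eqOn {f g : ℝ → ℝ} {a b : ℝ} (hg : Continuous g)
    (h : ∀ x ∈ Set.uIcc a b, f x = g x) : IntervalIntegrable f volume a b :=
  (hg.intervalIntegrable a b).congr (by
    intro x hx
    exact (h x (uIoc_subset_uIcc hx)).symm)

private lemma stmt18_ftc_exp {ψ : ℝ → ℝ} (hψ : Continuous ψ) (s T : ℝ) :
    (∫ σ in s..T, ψ σ * Real.exp (-(∫ τ in s..σ, ψ τ)))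
      = 1 - Real.exp (-(∫ τ in s..T, ψ τ)) := by
  have hprim : Continuous fun σ => ∫ τ in s..σ, ψ τ :=
    intervalIntegral.continuous_primitive (fun a b => hψ.intervalIntegrable a b) s
  have hF : ∀ σ : ℝ, HasDerivAt (fun u => -Real.exp (-(∫ τ in s..u, ψ τ)))
      (ψ σ * Real.exp (-(∫ τ in s..σ, ψ τ))) σ := by
    intro σ
    have h1 : HasDerivAt (fun u => ∫ τ in s..u, ψ τ) (ψ σ) σ :=
      (hψ.integral_hasStrictDerivAt s σ).hasDerivAt
    have h2 : HasDerivAt (fun u => -Real.exp (-(∫ τ in s..u, ψ τ)))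
        (-(Real.exp (-(∫ τ in s..σ, ψ τ)) * -ψ σ)) σ := ((h1.neg).exp).neg
    rw [show ψ σ * Real.exp (-(∫ τ in s..σ, ψ τ)) = -(Real.exp (-(∫ τ in s..σ, ψ τ)) * -ψ σ) by ring]
    exact h2
  have hcont : Continuous fun σ => ψ σ * Real.exp (-(∫ τ in s..σ, ψ τ)) :=
    hψ.mul (Real.continuous_exp.comp hprim.neg)
  rw [intervalIntegral.integral_eq_sub_of_hasDerivAt (fun σ _ => hF σ)
    (hcont.intervalIntegrable _ _)]
  rw [intervalIntegral.integral_same]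
  simp
  ring

/-- A priori bounds for the diagonal nonlinear integral equation arising
from the power-utility TIC SDG example: if a continuous positive `φ̄ : [0,T] → (0,∞)^m`
satisfies the integral equation, then `g₀ e^{−γ(T−s)} ≤ φ̄^a(s)` and the stated upper
bound holds; in particular `φ̄` is uniformly bounded above and below away from zero. -/
theorem stmt18_integral_equation_bounds
    (T : ℝ) (hT : 0 < T) (m : ℕ) (hm : 0 < m)
    (β γ g₀ : ℝ) (hβ0 : 0 < β) (hβ1 : β < 1) (hγ : 0 < γ) (hg₀ : 0 < g₀)
    (k : Fin m → ℝ → ℝ → ℝ) (gb : Fin m → ℝ → ℝ) (vb : Fin m → Fin m → ℝ → ℝ → ℝ)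
    (hkc : ∀ a : Fin m, ContinuousOn (fun p : ℝ × ℝ => k a p.1 p.2)
      {p : ℝ × ℝ | 0 ≤ p.1 ∧ p.1 ≤ p.2 ∧ p.2 ≤ T})
    (hgc : ∀ a : Fin m, ContinuousOn (gb a) (Icc 0 T))
    (hvc : ∀ a b : Fin m, ContinuousOn (fun p : ℝ × ℝ => vb a b p.1 p.2)
      {p : ℝ × ℝ | 0 ≤ p.1 ∧ p.1 ≤ p.2 ∧ p.2 ≤ T})
    -- `ḡ^a(s) exp(∫_s^T k^a(s,τ) dτ) ≥ g₀`
    (hgb : ∀ a : Fin m, ∀ s ∈ Icc (0 : ℝ) T,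
      g₀ ≤ gb a s * Real.exp (∫ τ in s..T, k a s τ))
    -- `v̄^{ab}(s,σ) exp(∫_s^σ k^a(s,τ) dτ) ≥ e^{−γ(σ−s)}`
    (hvb : ∀ a b : Fin m, ∀ s σ : ℝ, 0 ≤ s → s ≤ σ → σ ≤ T →
      Real.exp (-γ * (σ - s)) ≤ vb a b s σ * Real.exp (∫ τ in s..σ, k a s τ))
    (φ : Fin m → ℝ → ℝ)
    (hφc : ∀ a : Fin m, ContinuousOn (φ a) (Icc 0 T))
    (hφpos : ∀ a : Fin m, ∀ s ∈ Icc (0 : ℝ) T, 0 < φ a s)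
    -- the nonlinear integral equation
    (heq : ∀ a : Fin m, ∀ s ∈ Icc (0 : ℝ) T,
      φ a s =
        Real.exp (∫ τ in s..T,
            (k a s τ - ∑ b : Fin m, β * φ b τ ^ (1 / (β - 1)))) * gb a s +
        ∫ σ in s..T,
          Real.exp (∫ τ in s..σ,
              (k a s τ - ∑ b : Fin m, β * φ b τ ^ (1 / (β - 1)))) *
            (∑ b : Fin m, vb a b s σ * φ b σ ^ (β / (β - 1)))) :
    (∀ a : Fin m, ∀ s ∈ Icc (0 : ℝ) T,
      g₀ * Real.exp (-γ * (T - s)) ≤ φ a s ∧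
      φ a s ≤
        Real.exp (∫ τ in s..T, k a s τ) * gb a s +
          (g₀ * Real.exp (-γ * T)) ^ (β / (β - 1)) *
            ∫ σ in s..T,
              Real.exp (∫ τ in s..σ, k a s τ) * (∑ b : Fin m, vb a b s σ)) ∧
    ∃ c C : ℝ, 0 < c ∧ ∀ a : Fin m, ∀ s ∈ Icc (0 : ℝ) T, c ≤ φ a s ∧ φ a s ≤ C := by
  have hβ1' : β - 1 < 0 := by linarith
  have hTle : (0:ℝ) ≤ T := hT.le
  set p : ℝ := 1 / (β - 1) with hp
  set q : ℝ := β / (β - 1) with hq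
  have hpneg : p < 0 := div_neg_of_pos_of_neg one_pos hβ1'
  have hqneg : q < 0 := div_neg_of_pos_of_neg hβ0 hβ1'
  have hβne : β - 1 ≠ 0 := ne_of_lt hβ1'
  have hqp : q = 1 + p := by
    rw [hq, hp, one_add_div hβne]
    norm_num
  -- clamped versions of φ, continuous on all of ℝ
  have hclamp_mem : ∀ τ : ℝ, max 0 (min T τ) ∈ Icc (0:ℝ) T := fun τ =>
    ⟨le_max_left _ _, max_le hTle (min_le_left _ _)⟩
  have hclamp_eq : ∀ τ ∈ Icc (0:ℝ) T, max 0 (min T τ) = τ := fun τ hτ => by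
    rw [min_eq_right hτ.2, max_eq_right hτ.1]
  set Φ : Fin m → ℝ → ℝ := fun b τ => φ b (max 0 (min T τ)) with hΦdef
  have hΦc : ∀ b, Continuous (Φ b) := fun b =>
    (hφc b).comp_continuous (continuous_const.max (continuous_const.min continuous_id))
      hclamp_mem
  have hΦpos : ∀ b τ, 0 < Φ b τ := fun b τ => hφpos b _ (hclamp_mem τ)
  have hΦeq : ∀ b, ∀ τ ∈ Icc (0:ℝ) T, Φ b τ = φ b τ := fun b τ hτ => by
    simp only [hΦdef]
    rw [hclamp_eq τ hτ]
  set ψ : ℝ → ℝ := fun τ => ∑ b : Fin m, β * Φ b τ ^ p with hψdef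
  have hψc : Continuous ψ := continuous_finset_sum _ fun b _ =>
    continuous_const.mul ((hΦc b).rpow_const fun x => Or.inl (hΦpos b x).ne')
  have hψnn : ∀ τ, 0 ≤ ψ τ := fun τ => Finset.sum_nonneg fun b _ =>
    mul_nonneg hβ0.le (Real.rpow_pos_of_pos (hΦpos b τ) p).le
  have hψeq : ∀ τ ∈ Icc (0:ℝ) T, (∑ b : Fin m, β * φ b τ ^ p) = ψ τ := fun τ hτ => by
    simp only [hψdef]
    exact Finset.sum_congr rfl fun b _ => by rw [hΦeq b τ hτ]
  have hψprim : Continuous fun σ : ℝ × ℝ => (0:ℝ) := continuous_const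
  -- master rewrite of the integral equation in terms of globally continuous data
  have master : ∀ (a₀ : Fin m) (s₀ : ℝ), s₀ ∈ Icc (0:ℝ) T →
      ∃ K : ℝ → ℝ, ∃ V : Fin m → ℝ → ℝ, Continuous K ∧ (∀ b, Continuous (V b)) ∧
        (∀ σ ∈ Icc s₀ T, (∫ τ in s₀..σ, k a₀ s₀ τ) = ∫ τ in s₀..σ, K τ) ∧
        (∀ b, ∀ σ ∈ Icc s₀ T, V b σ = vb a₀ b s₀ σ) ∧
        φ a₀ s₀ =
          Real.exp (-(∫ τ in s₀..T, ψ τ)) * (Real.exp (∫ τ in s₀..T, K τ) * gb a₀ s₀) +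
          ∫ σ in s₀..T, Real.exp (-(∫ τ in s₀..σ, ψ τ)) *
            (Real.exp (∫ τ in s₀..σ, K τ) * (∑ b : Fin m, V b σ * Φ b σ ^ q)) := by
    intro a₀ s₀ hs₀
    have hcl_mem : ∀ τ : ℝ, max s₀ (min T τ) ∈ Icc s₀ T := fun τ =>
      ⟨le_max_left _ _, max_le hs₀.2 (min_le_left _ _)⟩
    have hcl_eq : ∀ τ ∈ Icc s₀ T, max s₀ (min T τ) = τ := fun τ hτ => by
      rw [min_eq_right hτ.2, max_eq_right hτ.1]
    have hclc : Continuous fun τ : ℝ => max s₀ (min T τ) :=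
      continuous_const.max (continuous_const.min continuous_id)
    refine ⟨fun τ => k a₀ s₀ (max s₀ (min T τ)), fun b σ => vb a₀ b s₀ (max s₀ (min T σ)),
      ?_, ?_, ?_, ?_, ?_⟩
    · exact (hkc a₀).comp_continuous (continuous_const.prodMk hclc)
        (fun τ => ⟨hs₀.1, (hcl_mem τ).1, (hcl_mem τ).2⟩)
    · intro b
      exact (hvc a₀ b).comp_continuous (continuous_const.prodMk hclc)
        (fun τ => ⟨hs₀.1, (hcl_mem τ).1, (hcl_mem τ).2⟩)
    · intro σ hσ
      refine intervalIntegral.integral_congr fun τ hτ => ?_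
      rw [uIcc_of_le hσ.1] at hτ
      rw [hcl_eq τ ⟨hτ.1, hτ.2.trans hσ.2⟩]
    · intro b σ hσ
      beta_reduce
      rw [hcl_eq σ hσ]
    · -- the rewritten integral equation
      have hKc : Continuous fun τ => k a₀ s₀ (max s₀ (min T τ)) :=
        (hkc a₀).comp_continuous (continuous_const.prodMk hclc)
          (fun τ => ⟨hs₀.1, (hcl_mem τ).1, (hcl_mem τ).2⟩)
      have hsplit : ∀ σ ∈ Icc s₀ T,
          (∫ τ in s₀..σ, (k a₀ s₀ τ - ∑ b : Fin m, β * φ b τ ^ p))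
            = (∫ τ in s₀..σ, k a₀ s₀ (max s₀ (min T τ))) - ∫ τ in s₀..σ, ψ τ := by
        intro σ hσ
        have h1 : (∫ τ in s₀..σ, (k a₀ s₀ τ - ∑ b : Fin m, β * φ b τ ^ p))
            = ∫ τ in s₀..σ, (k a₀ s₀ (max s₀ (min T τ)) - ψ τ) := by
          refine intervalIntegral.integral_congr fun τ hτ => ?_
          rw [uIcc_of_le hσ.1] at hτ
          have hτ1 : τ ∈ Icc s₀ T := ⟨hτ.1, hτ.2.trans hσ.2⟩
          have hτ2 : τ ∈ Icc (0:ℝ) T := ⟨hs₀.1.trans hτ.1, hτ1.2⟩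
          rw [hcl_eq τ hτ1, hψeq τ hτ2]
        rw [h1, intervalIntegral.integral_sub (hKc.intervalIntegrable _ _)
          (hψc.intervalIntegrable _ _)]
      beta_reduce
      rw [heq a₀ s₀ hs₀]
      congr 1
      · rw [hsplit T ⟨hs₀.2, le_rfl⟩, Real.exp_sub, Real.exp_neg]
        ring
      · refine intervalIntegral.integral_congr fun σ hσ => ?_
        rw [uIcc_of_le hs₀.2] at hσ
        have hσ2 : σ ∈ Icc (0:ℝ) T := ⟨hs₀.1.trans hσ.1, hσ.2⟩
        have hsum : (∑ b : Fin m, vb a₀ b s₀ σ * φ b σ ^ q)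
            = ∑ b : Fin m, vb a₀ b s₀ (max s₀ (min T σ)) * Φ b σ ^ q :=
          Finset.sum_congr rfl fun b _ => by rw [hcl_eq σ hσ, hΦeq b σ hσ2]
        rw [hsplit σ hσ, Real.exp_sub, Real.exp_neg, hsum]
        ring
  -- extreme value argument: global minimum of (a,s) ↦ φ a s * exp (-γ s)
  set z : Fin m → ℝ → ℝ := fun a s => φ a s * Real.exp (-γ * s) with hzdef
  have hzc : ∀ a, ContinuousOn (z a) (Icc 0 T) := fun a =>
    (hφc a).mul (Real.continuous_exp.comp (continuous_const.mul continuous_id)).continuousOn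
  have hne : (Icc (0:ℝ) T).Nonempty := ⟨0, left_mem_Icc.mpr hTle⟩
  have hex : ∀ a : Fin m, ∃ s ∈ Icc (0:ℝ) T, ∀ y ∈ Icc (0:ℝ) T, z a s ≤ z a y := by
    intro a
    obtain ⟨x, hx, hmin⟩ := isCompact_Icc.exists_isMinOn hne (hzc a)
    exact ⟨x, hx, fun y hy => (isMinOn_iff.mp hmin) y hy⟩
  choose sm hsm hsmin using hex
  obtain ⟨a₀, -, ha₀⟩ := Finset.exists_min_image Finset.univ (fun a => z a (sm a))
    ⟨⟨0, hm⟩, Finset.mem_univ _⟩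
  set s₀ := sm a₀ with hs₀def
  have hs₀ : s₀ ∈ Icc (0:ℝ) T := hsm a₀
  have hμ : ∀ b : Fin m, ∀ σ ∈ Icc (0:ℝ) T, z a₀ s₀ ≤ z b σ := fun b σ hσ =>
    le_trans (ha₀ b (Finset.mem_univ b)) (hsmin b σ hσ)
  have hμφ : ∀ b : Fin m, ∀ σ ∈ Icc (0:ℝ) T, z a₀ s₀ * Real.exp (γ * σ) ≤ φ b σ := by
    intro b σ hσ
    have h1 := mul_le_mul_of_nonneg_right (hμ b σ hσ) (Real.exp_pos (γ * σ)).le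
    have h2 : z b σ * Real.exp (γ * σ) = φ b σ := by
      simp only [hzdef]
      rw [mul_assoc, ← Real.exp_add]
      have : -γ * σ + γ * σ = 0 := by ring
      rw [this, Real.exp_zero, mul_one]
    linarith
  have hμpos : 0 < z a₀ s₀ := mul_pos (hφpos a₀ s₀ hs₀) (Real.exp_pos _)
  -- the key lower bound at the minimum point
  have hkey : g₀ ≤ φ a₀ s₀ := by
    obtain ⟨K, V, hKc, hVc, hKeq, hVeq, heq'⟩ := master a₀ s₀ hs₀
    have hIcont : Continuous fun σ => Real.exp (-(∫ τ in s₀..σ, ψ τ)) *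
        (Real.exp (∫ τ in s₀..σ, K τ) * (∑ b : Fin m, V b σ * Φ b σ ^ q)) :=
      (Real.continuous_exp.comp (intervalIntegral.continuous_primitive
          (fun a b => hψc.intervalIntegrable a b) s₀).neg).mul
        ((Real.continuous_exp.comp (intervalIntegral.continuous_primitive
          (fun a b => hKc.intervalIntegrable a b) s₀)).mul
          (continuous_finset_sum _ fun b _ =>
            (hVc b).mul ((hΦc b).rpow_const fun x => Or.inl (hΦpos b x).ne')))
    have hGcont : Continuous fun σ => z a₀ s₀ * Real.exp (γ * s₀) *
        (ψ σ * Real.exp (-(∫ τ in s₀..σ, ψ τ))) :=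
      continuous_const.mul (hψc.mul (Real.continuous_exp.comp
        (intervalIntegral.continuous_primitive (fun a b => hψc.intervalIntegrable a b) s₀).neg))
    have hpt : ∀ σ ∈ Icc s₀ T, z a₀ s₀ * Real.exp (γ * s₀) *
        (ψ σ * Real.exp (-(∫ τ in s₀..σ, ψ τ)))
        ≤ Real.exp (-(∫ τ in s₀..σ, ψ τ)) *
          (Real.exp (∫ τ in s₀..σ, K τ) * (∑ b : Fin m, V b σ * Φ b σ ^ q)) := by
      intro σ hσ
      have hσ2 : σ ∈ Icc (0:ℝ) T := ⟨hs₀.1.trans hσ.1, hσ.2⟩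
      have hterm : ∀ b : Fin m,
          Real.exp (-γ * (σ - s₀)) * ((z a₀ s₀ * Real.exp (γ * σ)) * Φ b σ ^ p)
            ≤ (V b σ * Real.exp (∫ τ in s₀..σ, K τ)) * (Φ b σ ^ q) := by
        intro b
        have hvb' : Real.exp (-γ * (σ - s₀)) ≤ V b σ * Real.exp (∫ τ in s₀..σ, K τ) := by
          rw [hVeq b σ hσ, ← hKeq σ hσ]
          exact hvb a₀ b s₀ σ hs₀.1 hσ.1 hσ.2
        have hφb : z a₀ s₀ * Real.exp (γ * σ) ≤ Φ b σ := by
          rw [hΦeq b σ hσ2]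
          exact hμφ b σ hσ2
        have hq' : Φ b σ ^ q = Φ b σ * Φ b σ ^ p := by
          rw [hqp, Real.rpow_add (hΦpos b σ), Real.rpow_one]
        rw [hq']
        exact mul_le_mul hvb' (mul_le_mul_of_nonneg_right hφb
          (Real.rpow_pos_of_pos (hΦpos b σ) p).le)
          (mul_nonneg (mul_pos hμpos (Real.exp_pos _)).le
            (Real.rpow_pos_of_pos (hΦpos b σ) p).le)
          (le_trans (Real.exp_pos _).le hvb')
      have hsum : z a₀ s₀ * Real.exp (γ * s₀) * ψ σ
          ≤ Real.exp (∫ τ in s₀..σ, K τ) * (∑ b : Fin m, V b σ * Φ b σ ^ q) := by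
        have h1 : z a₀ s₀ * Real.exp (γ * s₀) * ψ σ
            = ∑ b : Fin m, z a₀ s₀ * Real.exp (γ * s₀) * (β * Φ b σ ^ p) := by
          simp only [hψdef]
          rw [Finset.mul_sum]
        have h2 : Real.exp (∫ τ in s₀..σ, K τ) * (∑ b : Fin m, V b σ * Φ b σ ^ q)
            = ∑ b : Fin m, (V b σ * Real.exp (∫ τ in s₀..σ, K τ)) * (Φ b σ ^ q) := by
          rw [Finset.mul_sum]
          exact Finset.sum_congr rfl fun b _ => by ring
        rw [h1, h2]
        refine Finset.sum_le_sum fun b _ => le_trans ?_ (hterm b)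
        have hEe : Real.exp (-γ * (σ - s₀)) * Real.exp (γ * σ) = Real.exp (γ * s₀) := by
          rw [← Real.exp_add]
          congr 1
          ring
        have hβle : β * Φ b σ ^ p ≤ Φ b σ ^ p := by
          nlinarith [Real.rpow_pos_of_pos (hΦpos b σ) p]
        calc z a₀ s₀ * Real.exp (γ * s₀) * (β * Φ b σ ^ p)
            ≤ z a₀ s₀ * Real.exp (γ * s₀) * Φ b σ ^ p :=
              mul_le_mul_of_nonneg_left hβle (mul_pos hμpos (Real.exp_pos _)).le
          _ = Real.exp (-γ * (σ - s₀)) * ((z a₀ s₀ * Real.exp (γ * σ)) * Φ b σ ^ p) := by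
              rw [← hEe]; ring
      calc z a₀ s₀ * Real.exp (γ * s₀) * (ψ σ * Real.exp (-(∫ τ in s₀..σ, ψ τ)))
          = Real.exp (-(∫ τ in s₀..σ, ψ τ)) * (z a₀ s₀ * Real.exp (γ * s₀) * ψ σ) := by ring
        _ ≤ Real.exp (-(∫ τ in s₀..σ, ψ τ)) *
              (Real.exp (∫ τ in s₀..σ, K τ) * (∑ b : Fin m, V b σ * Φ b σ ^ q)) :=
            mul_le_mul_of_nonneg_left hsum (Real.exp_pos _).le
    have hint := intervalIntegral.integral_mono_on (μ := volume) hs₀.2 (hGcont.intervalIntegrable _ _)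
      (hIcont.intervalIntegrable _ _) hpt
    have hG : (∫ σ in s₀..T, z a₀ s₀ * Real.exp (γ * s₀) *
          (ψ σ * Real.exp (-(∫ τ in s₀..σ, ψ τ))))
        = z a₀ s₀ * Real.exp (γ * s₀) * (1 - Real.exp (-(∫ τ in s₀..T, ψ τ))) := by
      rw [intervalIntegral.integral_const_mul, stmt18_ftc_exp hψc s₀ T]
    have hfirst : Real.exp (-(∫ τ in s₀..T, ψ τ)) * g₀
        ≤ Real.exp (-(∫ τ in s₀..T, ψ τ)) * (Real.exp (∫ τ in s₀..T, K τ) * gb a₀ s₀) := by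
      refine mul_le_mul_of_nonneg_left ?_ (Real.exp_pos _).le
      rw [← hKeq T ⟨hs₀.2, le_rfl⟩]
      calc g₀ ≤ gb a₀ s₀ * Real.exp (∫ τ in s₀..T, k a₀ s₀ τ) := hgb a₀ s₀ hs₀
        _ = Real.exp (∫ τ in s₀..T, k a₀ s₀ τ) * gb a₀ s₀ := mul_comm _ _
    have hφeq' : z a₀ s₀ * Real.exp (γ * s₀) = φ a₀ s₀ := by
      simp only [hzdef]
      rw [mul_assoc, ← Real.exp_add]
      have : -γ * s₀ + γ * s₀ = 0 := by ring
      rw [this, Real.exp_zero, mul_one]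
    have htot : Real.exp (-(∫ τ in s₀..T, ψ τ)) * g₀ +
        z a₀ s₀ * Real.exp (γ * s₀) * (1 - Real.exp (-(∫ τ in s₀..T, ψ τ))) ≤ φ a₀ s₀ := by
      rw [heq']
      exact add_le_add hfirst (hG ▸ hint)
    rw [hφeq'] at htot
    nlinarith [Real.exp_pos (-(∫ τ in s₀..T, ψ τ))]
  -- the lower bound
  have hlow : ∀ a : Fin m, ∀ s ∈ Icc (0:ℝ) T, g₀ * Real.exp (-γ * (T - s)) ≤ φ a s := by
    intro a s hs
    have h1 : z a₀ s₀ * Real.exp (γ * s) ≤ φ a s := hμφ a s hs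
    have h2 : g₀ * Real.exp (-γ * s₀) ≤ z a₀ s₀ := by
      simp only [hzdef]
      exact mul_le_mul_of_nonneg_right hkey (Real.exp_pos _).le
    have h3 : Real.exp (-γ * (T - s)) ≤ Real.exp (-γ * s₀) * Real.exp (γ * s) := by
      rw [← Real.exp_add, Real.exp_le_exp]
      nlinarith [hs₀.2, hγ]
    calc g₀ * Real.exp (-γ * (T - s)) ≤ g₀ * (Real.exp (-γ * s₀) * Real.exp (γ * s)) :=
          mul_le_mul_of_nonneg_left h3 hg₀.le
      _ = (g₀ * Real.exp (-γ * s₀)) * Real.exp (γ * s) := by ring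
      _ ≤ z a₀ s₀ * Real.exp (γ * s) := mul_le_mul_of_nonneg_right h2 (Real.exp_pos _).le
      _ ≤ φ a s := h1
  -- the upper bound
  have hup : ∀ a : Fin m, ∀ s ∈ Icc (0:ℝ) T, φ a s ≤
      Real.exp (∫ τ in s..T, k a s τ) * gb a s +
        (g₀ * Real.exp (-γ * T)) ^ q *
          ∫ σ in s..T, Real.exp (∫ τ in s..σ, k a s τ) * (∑ b : Fin m, vb a b s σ) := by
    intro a s hs
    obtain ⟨K, V, hKc, hVc, hKeq, hVeq, heq'⟩ := master a s hs
    have hDpos : 0 < (g₀ * Real.exp (-γ * T)) ^ q :=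
      Real.rpow_pos_of_pos (mul_pos hg₀ (Real.exp_pos _)) q
    have hVpos : ∀ b : Fin m, ∀ σ ∈ Icc s T, 0 < V b σ := by
      intro b σ hσ
      have h1 : (0:ℝ) < V b σ * Real.exp (∫ τ in s..σ, K τ) := by
        rw [hVeq b σ hσ, ← hKeq σ hσ]
        exact lt_of_lt_of_le (Real.exp_pos _) (hvb a b s σ hs.1 hσ.1 hσ.2)
      rcases mul_pos_iff.mp h1 with ⟨h, -⟩ | ⟨-, h⟩
      · exact h
      · exact absurd h (not_lt.mpr (Real.exp_pos _).le)
    have hΦD : ∀ b : Fin m, ∀ σ ∈ Icc s T, Φ b σ ^ q ≤ (g₀ * Real.exp (-γ * T)) ^ q := by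
      intro b σ hσ
      have hσ2 : σ ∈ Icc (0:ℝ) T := ⟨hs.1.trans hσ.1, hσ.2⟩
      have h1 : g₀ * Real.exp (-γ * T) ≤ Φ b σ := by
        rw [hΦeq b σ hσ2]
        refine le_trans ?_ (hlow b σ hσ2)
        refine mul_le_mul_of_nonneg_left ?_ hg₀.le
        rw [Real.exp_le_exp]
        nlinarith [hσ2.1, hγ]
      exact Real.rpow_le_rpow_of_nonpos (mul_pos hg₀ (Real.exp_pos _)) h1 hqneg.le
    have hpt : ∀ σ ∈ Icc s T,
        Real.exp (-(∫ τ in s..σ, ψ τ)) *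
          (Real.exp (∫ τ in s..σ, K τ) * (∑ b : Fin m, V b σ * Φ b σ ^ q))
        ≤ (g₀ * Real.exp (-γ * T)) ^ q *
          (Real.exp (∫ τ in s..σ, K τ) * (∑ b : Fin m, V b σ)) := by
      intro σ hσ
      have hsum : (∑ b : Fin m, V b σ * Φ b σ ^ q)
          ≤ (g₀ * Real.exp (-γ * T)) ^ q * (∑ b : Fin m, V b σ) := by
        rw [Finset.mul_sum]
        refine Finset.sum_le_sum fun b _ => ?_
        calc V b σ * Φ b σ ^ q ≤ V b σ * (g₀ * Real.exp (-γ * T)) ^ q :=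
              mul_le_mul_of_nonneg_left (hΦD b σ hσ) (hVpos b σ hσ).le
          _ = (g₀ * Real.exp (-γ * T)) ^ q * V b σ := mul_comm _ _
      have hsnn : 0 ≤ ∑ b : Fin m, V b σ * Φ b σ ^ q := Finset.sum_nonneg fun b _ =>
        mul_nonneg (hVpos b σ hσ).le (Real.rpow_pos_of_pos (hΦpos b σ) q).le
      have hexp1 : Real.exp (-(∫ τ in s..σ, ψ τ)) ≤ 1 := by
        rw [Real.exp_le_one_iff, neg_nonpos]
        exact intervalIntegral.integral_nonneg hσ.1 (fun u _ => hψnn u)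
      calc Real.exp (-(∫ τ in s..σ, ψ τ)) *
            (Real.exp (∫ τ in s..σ, K τ) * (∑ b : Fin m, V b σ * Φ b σ ^ q))
          ≤ 1 * (Real.exp (∫ τ in s..σ, K τ) * (∑ b : Fin m, V b σ * Φ b σ ^ q)) :=
            mul_le_mul_of_nonneg_right hexp1 (mul_nonneg (Real.exp_pos _).le hsnn)
        _ = Real.exp (∫ τ in s..σ, K τ) * (∑ b : Fin m, V b σ * Φ b σ ^ q) := one_mul _
        _ ≤ Real.exp (∫ τ in s..σ, K τ) *
              ((g₀ * Real.exp (-γ * T)) ^ q * (∑ b : Fin m, V b σ)) :=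
            mul_le_mul_of_nonneg_left hsum (Real.exp_pos _).le
        _ = (g₀ * Real.exp (-γ * T)) ^ q *
              (Real.exp (∫ τ in s..σ, K τ) * (∑ b : Fin m, V b σ)) := by ring
    have hIcont : Continuous fun σ => Real.exp (-(∫ τ in s..σ, ψ τ)) *
        (Real.exp (∫ τ in s..σ, K τ) * (∑ b : Fin m, V b σ * Φ b σ ^ q)) :=
      (Real.continuous_exp.comp (intervalIntegral.continuous_primitive
          (fun a b => hψc.intervalIntegrable a b) s).neg).mul
        ((Real.continuous_exp.comp (intervalIntegral.continuous_primitive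
          (fun a b => hKc.intervalIntegrable a b) s)).mul
          (continuous_finset_sum _ fun b _ =>
            (hVc b).mul ((hΦc b).rpow_const fun x => Or.inl (hΦpos b x).ne')))
    have hJcont : Continuous fun σ => (g₀ * Real.exp (-γ * T)) ^ q *
        (Real.exp (∫ τ in s..σ, K τ) * (∑ b : Fin m, V b σ)) :=
      continuous_const.mul ((Real.continuous_exp.comp (intervalIntegral.continuous_primitive
          (fun a b => hKc.intervalIntegrable a b) s)).mul
        (continuous_finset_sum _ fun b _ => hVc b))
    have hint := intervalIntegral.integral_mono_on (μ := volume) hs.2 (hIcont.intervalIntegrable _ _)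
      (hJcont.intervalIntegrable _ _) hpt
    have hJ : (∫ σ in s..T, (g₀ * Real.exp (-γ * T)) ^ q *
          (Real.exp (∫ τ in s..σ, K τ) * (∑ b : Fin m, V b σ)))
        = (g₀ * Real.exp (-γ * T)) ^ q *
          ∫ σ in s..T, Real.exp (∫ τ in s..σ, k a s τ) * (∑ b : Fin m, vb a b s σ) := by
      rw [intervalIntegral.integral_const_mul]
      congr 1
      refine intervalIntegral.integral_congr fun σ hσ => ?_
      rw [uIcc_of_le hs.2] at hσ
      rw [← hKeq σ hσ]
      congr 1
      exact Finset.sum_congr rfl fun b _ => hVeq b σ hσ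
    have hgpos : 0 ≤ Real.exp (∫ τ in s..T, K τ) * gb a s := by
      rw [← hKeq T ⟨hs.2, le_rfl⟩]
      have h1 := lt_of_lt_of_le hg₀ (hgb a s hs)
      nlinarith [Real.exp_pos (∫ τ in s..T, k a s τ)]
    have hfirst : Real.exp (-(∫ τ in s..T, ψ τ)) * (Real.exp (∫ τ in s..T, K τ) * gb a s)
        ≤ Real.exp (∫ τ in s..T, k a s τ) * gb a s := by
      rw [hKeq T ⟨hs.2, le_rfl⟩]
      have hexp1 : Real.exp (-(∫ τ in s..T, ψ τ)) ≤ 1 := by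
        rw [Real.exp_le_one_iff, neg_nonpos]
        exact intervalIntegral.integral_nonneg hs.2 (fun u _ => hψnn u)
      calc Real.exp (-(∫ τ in s..T, ψ τ)) * (Real.exp (∫ τ in s..T, K τ) * gb a s)
          ≤ 1 * (Real.exp (∫ τ in s..T, K τ) * gb a s) :=
            mul_le_mul_of_nonneg_right hexp1 hgpos
        _ = Real.exp (∫ τ in s..T, K τ) * gb a s := one_mul _
    rw [heq']
    exact add_le_add hfirst (le_trans hint (le_of_eq hJ))
  -- conclusion
  refine ⟨fun a s hs => ⟨hlow a s hs, hup a s hs⟩, ?_⟩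
  have hCex : ∀ a : Fin m, ∃ x ∈ Icc (0:ℝ) T, ∀ y ∈ Icc (0:ℝ) T, φ a y ≤ φ a x := by
    intro a
    obtain ⟨x, hx, hmax⟩ := isCompact_Icc.exists_isMaxOn hne (hφc a)
    exact ⟨x, hx, fun y hy => (isMaxOn_iff.mp hmax) y hy⟩
  choose tm htm htmax using hCex
  obtain ⟨a₁, -, ha₁⟩ := Finset.exists_max_image Finset.univ (fun a => φ a (tm a))
    ⟨⟨0, hm⟩, Finset.mem_univ _⟩
  refine ⟨g₀ * Real.exp (-γ * T), φ a₁ (tm a₁), mul_pos hg₀ (Real.exp_pos _), ?_⟩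
  intro a s hs
  constructor
  · refine le_trans ?_ (hlow a s hs)
    refine mul_le_mul_of_nonneg_left ?_ hg₀.le
    rw [Real.exp_le_exp]
    nlinarith [hs.1, hγ]
  · exact le_trans (htmax a s hs) (ha₁ a (Finset.mem_univ a))

end
end
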